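/- Let A = [I;I] be the 2k×k stack of two identity matrices, E₁, E₂ symmetric positive definite, |r| < 1, and R = [[E₁, r√(E₁E₂)],[r(√(E₁E₂))ᵀ, E₂]]. Then AᵀR⁻¹A = (1-r²)⁻¹(S - rZ), where S = E₁⁻¹ + E₂⁻¹ and Z = √(E₁⁻¹E₂⁻¹) + (√(E₁⁻¹E₂⁻¹))ᵀ. -/

import Mathlib

open Matrix

open scoped ComplexOrder in
/-- The positive semidefinite square root of a positive semidefinite matrix (as in the
older Mathlib, where this definition existed). -/
noncomputable def Matrix.PosSemidef.sqrt {n 𝕜 : Type*} [Fintype n] [DecidableEq n] [RCLike 𝕜]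
    {A : Matrix n n 𝕜} (hA : A.PosSemidef) : Matrix n n 𝕜 :=
  (hA.1.eigenvectorUnitary : Matrix n n 𝕜) * diagonal ((↑) ∘ Real.sqrt ∘ hA.1.eigenvalues) *
    (star hA.1.eigenvectorUnitary : Matrix n n 𝕜)

section sqrtPort

open scoped MatrixOrder

lemma Matrix.PosSemidef.sqrt_eq_cfc_sqrt {n : Type*} [Fintype n] [DecidableEq n]
    {A : Matrix n n ℝ} (hA : A.PosSemidef) : hA.sqrt = CFC.sqrt A := by
  rw [CFC.sqrt_eq_cfc, cfc_nnreal_eq_real _ A, hA.1.cfc_eq]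
  simp only [IsHermitian.cfc, Unitary.conjStarAlgAut_apply, Matrix.PosSemidef.sqrt]
  congr 2
  congr 1
  funext i
  simp [Real.coe_sqrt, Real.coe_toNNReal', max_eq_left (hA.eigenvalues_nonneg i)]

lemma Matrix.PosSemidef.posSemidef_sqrt {n : Type*} [Fintype n] [DecidableEq n]
    {A : Matrix n n ℝ} (hA : A.PosSemidef) : hA.sqrt.PosSemidef := by
  rw [hA.sqrt_eq_cfc_sqrt]; exact (CFC.sqrt_nonneg A).posSemidef

lemma Matrix.PosSemidef.sqrt_mul_self {n : Type*} [Fintype n] [DecidableEq n]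
    {A : Matrix n n ℝ} (hA : A.PosSemidef) : hA.sqrt * hA.sqrt = A := by
  rw [hA.sqrt_eq_cfc_sqrt]; exact CFC.sqrt_mul_sqrt_self A hA.nonneg

lemma Matrix.PosSemidef.eq_sqrt_of_sq_eq {n : Type*} [Fintype n] [DecidableEq n]
    {A B : Matrix n n ℝ} (hA : A.PosSemidef) (hB : B.PosSemidef) (hAB : A ^ 2 = B) :
    A = hB.sqrt := by
  rw [hB.sqrt_eq_cfc_sqrt, eq_comm, CFC.sqrt_eq_iff B A hB.nonneg hA.nonneg, ← hAB, sq]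

end sqrtPort

variable {n : Type*} [Fintype n] [DecidableEq n]

lemma posDef_of_isUnit {A : Matrix n n ℝ} (hA : A.PosSemidef) (h : IsUnit A) :
    A.PosDef := by
  refine posDef_iff_dotProduct_mulVec.mpr ⟨hA.1, fun x hx => ?_⟩
  rcases lt_or_eq_of_le (hA.dotProduct_mulVec_nonneg x) with h' | h'
  · exact h'
  · exfalso
    have h0 : star x ⬝ᵥ A *ᵥ x = 0 := by simpa using h'.symm
    have hz := (hA.dotProduct_mulVec_zero_iff x).mp h0
    have hinj := Matrix.mulVec_injective_iff_isUnit.mpr h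
    exact hx (by simpa using hinj (hz.trans (A.mulVec_zero).symm))

lemma sqrt_congr {A B : Matrix n n ℝ} (h : A = B) (hA : A.PosSemidef) (hB : B.PosSemidef) :
    hA.sqrt = hB.sqrt := by subst h; rfl

lemma sqrt_posDef {A : Matrix n n ℝ} (hA : A.PosDef) : (hA.posSemidef.sqrt).PosDef := by
  refine posDef_of_isUnit hA.posSemidef.posSemidef_sqrt ?_
  have h2 : IsUnit (hA.posSemidef.sqrt.det * hA.posSemidef.sqrt.det) := by
    rw [← det_mul, hA.posSemidef.sqrt_mul_self]
    exact (isUnit_iff_isUnit_det _).mp hA.isUnit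
  exact (isUnit_iff_isUnit_det _).mpr (isUnit_of_mul_isUnit_left h2)

lemma sqrt_inv {A : Matrix n n ℝ} (hA : A.PosDef) :
    hA.inv.posSemidef.sqrt = hA.posSemidef.sqrt⁻¹ := by
  refine (PosSemidef.eq_sqrt_of_sq_eq (sqrt_posDef hA).inv.posSemidef hA.inv.posSemidef ?_).symm
  rw [pow_two, ← Matrix.mul_inv_rev, hA.posSemidef.sqrt_mul_self]

lemma quad_form {k : ℕ} (a b c d : Matrix (Fin k) (Fin k) ℝ)
    (A : Matrix (Fin k ⊕ Fin k) (Fin k) ℝ)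
    (hA : A = Matrix.of fun i j => if Sum.elim id id i = j then (1 : ℝ) else 0) :
    Aᵀ * fromBlocks a b c d * A = a + b + c + d := by
  have hA' : A = fromRows 1 1 := by
    rw [hA]; ext (i | i) j <;> simp [one_apply] <;> congr
  rw [hA', transpose_fromRows, Matrix.mul_assoc, fromBlocks_mul_fromRows,
    fromCols_mul_fromRows]
  simp [transpose_one]
  abel

/-- The principal square root of `E₁ * E₂` for positive definite `E₁, E₂`:
`E₁^{1/2} · (E₁^{1/2} E₂ E₁^{1/2})^{1/2} · E₁^{-1/2}`. -/
noncomputable def principalSqrtMul {k : ℕ} {E₁ E₂ : Matrix (Fin k) (Fin k) ℝ}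
    (h₁ : E₁.PosDef) (h₂ : E₂.PosDef) : Matrix (Fin k) (Fin k) ℝ :=
  h₁.posSemidef.sqrt *
    (h₂.posSemidef.mul_mul_conjTranspose_same h₁.posSemidef.sqrt).sqrt *
    h₁.posSemidef.sqrt⁻¹

/-- For `A = [I; I]`, `R` the pairwise joint covariance with correlation `r`, `|r| < 1`,
one has `AᵀR⁻¹A = (1-r²)⁻¹(S - rZ)` where `S = E₁⁻¹ + E₂⁻¹` and
`Z = √(E₁⁻¹E₂⁻¹) + (√(E₁⁻¹E₂⁻¹))ᵀ`. -/
theorem pairwise_normal_matrix (k : ℕ) (E₁ E₂ : Matrix (Fin k) (Fin k) ℝ)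
    (h₁ : E₁.PosDef) (h₂ : E₂.PosDef) (r : ℝ) (hr : |r| < 1)
    (A : Matrix (Fin k ⊕ Fin k) (Fin k) ℝ)
    (hA : A = Matrix.of fun i j => if Sum.elim id id i = j then (1 : ℝ) else 0) :
    Aᵀ * (Matrix.fromBlocks E₁ (r • principalSqrtMul h₁ h₂)
        (r • (principalSqrtMul h₁ h₂)ᵀ) E₂)⁻¹ * A
      = (1 - r ^ 2)⁻¹ •
        ((E₁⁻¹ + E₂⁻¹) - r • (principalSqrtMul h₁.inv h₂.inv
            + (principalSqrtMul h₁.inv h₂.inv)ᵀ)) := by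
  classical
  set S := h₁.posSemidef.sqrt with hSdef
  have hSpd : S.PosDef := sqrt_posDef h₁
  have hSd : IsUnit S.det := (isUnit_iff_isUnit_det S).mp hSpd.isUnit
  have hSH : Sᴴ = S := hSpd.1
  set W := (h₂.posSemidef.mul_mul_conjTranspose_same S).sqrt with hWdef
  have hWsq : W * W = S * E₂ * Sᴴ := (h₂.posSemidef.mul_mul_conjTranspose_same S).sqrt_mul_self
  have hBpd : (S * E₂ * Sᴴ).PosDef := by
    refine posDef_of_isUnit (h₂.posSemidef.mul_mul_conjTranspose_same S) ?_
    refine (isUnit_iff_isUnit_det _).mpr ?_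
    rw [det_mul, det_mul, det_conjTranspose]
    exact (hSd.mul ((isUnit_iff_isUnit_det _).mp h₂.isUnit)).mul hSd.star
  have hWpd : W.PosDef := sqrt_posDef hBpd
  have hWd : IsUnit W.det := (isUnit_iff_isUnit_det W).mp hWpd.isUnit
  have hWH : Wᴴ = W := hWpd.1
  haveI : Invertible S := S.invertibleOfIsUnitDet hSd
  haveI : Invertible W := W.invertibleOfIsUnitDet hWd
  -- P and Q in terms of S and W
  set P := principalSqrtMul h₁ h₂ with hPdef
  have hP : P = S * W * S⁻¹ := by
    rw [hPdef, principalSqrtMul]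
  set Q := principalSqrtMul h₁.inv h₂.inv with hQdef
  have hT : h₁.inv.posSemidef.sqrt = S⁻¹ := sqrt_inv h₁
  have hmid : h₁.inv.posSemidef.sqrt * E₂⁻¹ * (h₁.inv.posSemidef.sqrt)ᴴ
      = (S * E₂ * Sᴴ)⁻¹ := by
    rw [hT, conjTranspose_nonsing_inv, hSH, Matrix.mul_inv_rev, Matrix.mul_inv_rev,
      ← Matrix.mul_assoc]
  have hmidsqrt : (h₂.inv.posSemidef.mul_mul_conjTranspose_same h₁.inv.posSemidef.sqrt).sqrt
      = W⁻¹ := by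
    rw [sqrt_congr hmid _ hBpd.inv.posSemidef, sqrt_inv hBpd,
      sqrt_congr rfl hBpd.posSemidef (h₂.posSemidef.mul_mul_conjTranspose_same S)]
  have hQ : Q = S⁻¹ * W⁻¹ * S := by
    rw [hQdef, principalSqrtMul, hmidsqrt, hT, Matrix.inv_inv_of_invertible]
  -- transposes
  have hST : Sᵀ = S := by
    have := hSH; rwa [conjTranspose_eq_transpose_of_trivial] at this
  have hWT : Wᵀ = W := by
    have := hWH; rwa [conjTranspose_eq_transpose_of_trivial] at this
  have hSiT : (S⁻¹)ᵀ = S⁻¹ := by rw [transpose_nonsing_inv, hST]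
  have hWiT : (W⁻¹)ᵀ = W⁻¹ := by rw [transpose_nonsing_inv, hWT]
  have hPT : Pᵀ = S⁻¹ * W * S := by
    rw [hP, transpose_mul, transpose_mul, hST, hWT, hSiT, Matrix.mul_assoc]
  have hQT : Qᵀ = S * W⁻¹ * S⁻¹ := by
    rw [hQ, transpose_mul, transpose_mul, hST, hWiT, hSiT, Matrix.mul_assoc]
  -- E₁, E₂ in terms of S, W
  have hE₁ : E₁ = S * S := h₁.posSemidef.sqrt_mul_self.symm
  have hE₁i : E₁⁻¹ = S⁻¹ * S⁻¹ := by rw [hE₁, Matrix.mul_inv_rev]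
  have hE₂ : E₂ = S⁻¹ * (W * W) * S⁻¹ := by
    rw [hWsq, hSH]
    simp only [Matrix.mul_assoc, Matrix.inv_mul_cancel_left_of_invertible]
    rw [← Matrix.mul_assoc, Matrix.mul_inv_cancel_right_of_invertible]
  have hE₂i : E₂⁻¹ = S * (W⁻¹ * W⁻¹) * S := by
    rw [hE₂, Matrix.mul_inv_rev, Matrix.mul_inv_rev, Matrix.mul_inv_rev,
      Matrix.inv_inv_of_invertible]
    simp only [Matrix.mul_assoc]
  -- the four identities
  have hPQt : P * Qᵀ = 1 := by
    rw [hP, hQT]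
    simp only [Matrix.mul_assoc, Matrix.inv_mul_cancel_left_of_invertible,
      Matrix.mul_inv_cancel_left_of_invertible, Matrix.mul_inv_of_invertible]
  have hPtQ : Pᵀ * Q = 1 := by
    rw [hPT, hQ]
    simp only [Matrix.mul_assoc, Matrix.mul_inv_cancel_left_of_invertible,
      Matrix.inv_mul_cancel_left_of_invertible, Matrix.inv_mul_of_invertible]
  have hPE : P * E₂⁻¹ = E₁ * Q := by
    rw [hP, hE₂i, hE₁, hQ]
    simp only [Matrix.mul_assoc, Matrix.inv_mul_cancel_left_of_invertible,
      Matrix.mul_inv_cancel_left_of_invertible]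
  have hPtE : Pᵀ * E₁⁻¹ = E₂ * Qᵀ := by
    rw [hPT, hE₁i, hE₂, hQT]
    simp only [Matrix.mul_assoc, Matrix.inv_mul_cancel_left_of_invertible,
      Matrix.mul_inv_cancel_left_of_invertible]
  -- nonzero scalar
  have hr2 : (1 : ℝ) - r ^ 2 ≠ 0 := by
    have : r ^ 2 < 1 := by
      have := abs_lt.mp hr
      nlinarith [this.1, this.2]
    linarith
  -- block inverse
  have key : (fromBlocks E₁ (r • P) (r • Pᵀ) E₂) *
      ((1 - r ^ 2)⁻¹ • fromBlocks E₁⁻¹ (-(r • Q)) (-(r • Qᵀ)) E₂⁻¹) = 1 := by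
    rw [Matrix.mul_smul, fromBlocks_multiply]
    have b11 : E₁ * E₁⁻¹ + r • P * -(r • Qᵀ) = (1 - r ^ 2) • 1 := by
      rw [Matrix.mul_nonsing_inv _ ((isUnit_iff_isUnit_det _).mp h₁.isUnit)]
      rw [Matrix.mul_neg, Matrix.smul_mul, Matrix.mul_smul, hPQt, smul_smul]
      rw [sub_smul, one_smul, ← pow_two]
      abel
    have b12 : E₁ * -(r • Q) + r • P * E₂⁻¹ = 0 := by
      rw [Matrix.mul_neg, Matrix.mul_smul, Matrix.smul_mul, hPE]
      abel
    have b21 : r • Pᵀ * E₁⁻¹ + E₂ * -(r • Qᵀ) = 0 := by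
      rw [Matrix.mul_neg, Matrix.mul_smul, Matrix.smul_mul, hPtE]
      abel
    have b22 : r • Pᵀ * -(r • Q) + E₂ * E₂⁻¹ = (1 - r ^ 2) • 1 := by
      rw [Matrix.mul_nonsing_inv _ ((isUnit_iff_isUnit_det _).mp h₂.isUnit)]
      rw [Matrix.mul_neg, Matrix.smul_mul, Matrix.mul_smul, hPtQ, smul_smul]
      rw [sub_smul, one_smul, ← pow_two]
      abel
    rw [b11, b12, b21, b22]
    have hfb : fromBlocks ((1 - r ^ 2) • (1 : Matrix (Fin k) (Fin k) ℝ)) 0 0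
        ((1 - r ^ 2) • (1 : Matrix (Fin k) (Fin k) ℝ))
        = (1 - r ^ 2) • (1 : Matrix (Fin k ⊕ Fin k) (Fin k ⊕ Fin k) ℝ) := by
      rw [← fromBlocks_one, fromBlocks_smul, smul_zero]
    rw [hfb, smul_smul, inv_mul_cancel₀ hr2, one_smul]
  have hRinv := Matrix.inv_eq_right_inv key
  rw [hRinv, Matrix.mul_smul, Matrix.smul_mul, quad_form _ _ _ _ A hA]
  congr 1
  rw [smul_add]
  abel
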